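/- Corollary 3.2(a), regret part: Let C be a finite set of functions c : X × [0,1] → [−1,1] and let Φ : X × [0,1] → ℝ^C be the feature map Φ(x,p) = (c(x,p))_{c∈C}. If a transcript (x_1,p_1,y_1),…,(x_T,p_T,y_T) with all p_t, y_t ∈ [0,1] satisfies the K29 invariant for Φ (for every t and every y ∈ [0,1], (y − p_t)·⟨Φ(x_t,p_t), Σ_{i=1}^{t−1}(y_i − p_i)Φ(x_i,p_i)⟩ ≤ 0), then for every c ∈ C: |Σ_{t=1}^T c(x_t,p_t)(y_t − p_t)| ≤ √(|C| · T). -/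

import Mathlib

open Finset Set
open scoped RealInnerProductSpace

lemma k29_aux {E : Type*} [NormedAddCommGroup E] [InnerProductSpace ℝ E]
    {T : ℕ} (f : Fin T → E) (B : ℝ)
    (hB : ∀ t, ‖f t‖ ^ 2 ≤ B)
    (h : ∀ t : Fin T, ⟪f t, ∑ i ∈ Finset.Iio t, f i⟫ ≤ 0) :
    ∀ n ≤ T, ‖∑ i ∈ Finset.univ.filter (fun i : Fin T => i.val < n), f i‖ ^ 2
      ≤ n * B := by
  intro n
  induction n with
  | zero =>
    intro _
    simp
  | succ n ih =>
    intro hn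
    have hn' : n < T := hn
    have hnT : n ≤ T := le_of_lt hn'
    set t : Fin T := ⟨n, hn'⟩ with ht
    have hset : Finset.univ.filter (fun i : Fin T => i.val < n + 1)
        = insert t (Finset.univ.filter (fun i : Fin T => i.val < n)) := by
      ext i
      simp only [Finset.mem_filter, Finset.mem_univ, true_and, Finset.mem_insert]
      constructor
      · intro hi
        rcases Nat.lt_succ_iff_lt_or_eq.mp hi with h' | h'
        · exact Or.inr h'
        · exact Or.inl (Fin.ext h')
      · rintro (rfl | hi)
        · exact Nat.lt_succ_self n
        · exact Nat.lt_succ_of_lt hi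
    have hIio : Finset.univ.filter (fun i : Fin T => i.val < n) = Finset.Iio t := by
      ext i
      rw [Finset.mem_filter, Finset.mem_Iio]
      exact ⟨fun h => h.2, fun h => ⟨Finset.mem_univ _, h⟩⟩
    have htnot : t ∉ Finset.univ.filter (fun i : Fin T => i.val < n) := by
      simp
      exact le_rfl
    rw [hset, Finset.sum_insert htnot]
    rw [norm_add_sq_real]
    have h1 : ⟪f t, ∑ i ∈ Finset.univ.filter (fun i : Fin T => i.val < n), f i⟫ ≤ 0 := by
      rw [hIio]; exact h t
    have h2 := ih hnT
    have h3 := hB t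
    push_cast
    nlinarith

theorem k29_finite_collection_regret
    {X : Type*} (C : Finset (X → ℝ → ℝ))
    (hC_bdd : ∀ c ∈ C, ∀ x : X, ∀ p ∈ Icc (0:ℝ) 1, c x p ∈ Icc (-1:ℝ) 1)
    (Φ : X → ℝ → EuclideanSpace ℝ C)
    (hΦ : ∀ (x : X) (p : ℝ) (c : C), Φ x p c = (c : X → ℝ → ℝ) x p)
    (T : ℕ) (x : Fin T → X) (p y : Fin T → ℝ)
    (hp : ∀ t, p t ∈ Icc (0:ℝ) 1) (hy : ∀ t, y t ∈ Icc (0:ℝ) 1)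
    (hinv : ∀ t : Fin T, ∀ y' ∈ Icc (0:ℝ) 1,
      (y' - p t) *
        ⟪Φ (x t) (p t), ∑ i ∈ Finset.Iio t, (y i - p i) • Φ (x i) (p i)⟫ ≤ 0) :
    ∀ c ∈ C,
      |∑ t, c (x t) (p t) * (y t - p t)| ≤ Real.sqrt ((C.card : ℝ) * T) := by
  intro c hc
  set f : Fin T → EuclideanSpace ℝ C := fun t => (y t - p t) • Φ (x t) (p t) with hf
  -- bound on each feature value
  have hΦnorm : ∀ t : Fin T, ‖Φ (x t) (p t)‖ ^ 2 ≤ (C.card : ℝ) := by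
    intro t
    have : ‖Φ (x t) (p t)‖ ^ 2 = ∑ c' : C, (Φ (x t) (p t) c') ^ 2 := by
      rw [EuclideanSpace.norm_eq]
      rw [Real.sq_sqrt (by positivity)]
      simp [Real.norm_eq_abs, sq_abs]
    rw [this]
    calc ∑ c' : C, (Φ (x t) (p t) c') ^ 2 ≤ ∑ _c' : C, (1:ℝ) := by
          apply Finset.sum_le_sum
          intro c' _
          rw [hΦ]
          have := hC_bdd c' c'.2 (x t) (p t) (hp t)
          have h1 := this.1; have h2 := this.2
          nlinarith
      _ = (C.card : ℝ) := by simp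
  have hyp1 : ∀ t : Fin T, |y t - p t| ≤ 1 := by
    intro t
    have h1 := (hp t).1; have h2 := (hp t).2
    have h3 := (hy t).1; have h4 := (hy t).2
    rw [abs_le]; constructor <;> linarith
  have hB : ∀ t, ‖f t‖ ^ 2 ≤ (C.card : ℝ) := by
    intro t
    rw [hf]
    simp only [norm_smul, Real.norm_eq_abs, mul_pow]
    calc |y t - p t| ^ 2 * ‖Φ (x t) (p t)‖ ^ 2
        ≤ 1 * (C.card : ℝ) := by
          apply mul_le_mul
          · nlinarith [hyp1 t, abs_nonneg (y t - p t)]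
          · exact hΦnorm t
          · positivity
          · norm_num
      _ = (C.card : ℝ) := one_mul _
  have hinner : ∀ t : Fin T, ⟪f t, ∑ i ∈ Finset.Iio t, f i⟫ ≤ 0 := by
    intro t
    rw [hf]
    simp only
    rw [real_inner_smul_left]
    exact hinv t (y t) (hy t)
  have key := k29_aux f (C.card : ℝ) hB hinner T le_rfl
  have hall : Finset.univ.filter (fun i : Fin T => i.val < T) = Finset.univ := by
    ext i; simp [i.2]
  rw [hall] at key
  set S : EuclideanSpace ℝ C := ∑ i : Fin T, f i with hS
  -- coordinate of S at c
  have hcoord : S ⟨c, hc⟩ = ∑ t, c (x t) (p t) * (y t - p t) := by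
    rw [hS]
    have : (∑ i : Fin T, f i) ⟨c, hc⟩ = ∑ i : Fin T, f i ⟨c, hc⟩ := by
      rw [WithLp.ofLp_sum, Finset.sum_apply]
    rw [this]
    apply Finset.sum_congr rfl
    intro t _
    rw [hf]
    simp only [PiLp.smul_apply, smul_eq_mul]
    rw [hΦ]
    ring
  have habs : |S ⟨c, hc⟩| ≤ ‖S‖ := by
    have h1 : (S ⟨c, hc⟩) ^ 2 ≤ ‖S‖ ^ 2 := by
      rw [EuclideanSpace.norm_eq, Real.sq_sqrt (by positivity)]
      have h2 : (S ⟨c, hc⟩) ^ 2 = ‖S ⟨c, hc⟩‖ ^ 2 := by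
        rw [Real.norm_eq_abs, sq_abs]
      rw [h2]
      exact Finset.single_le_sum (f := fun i => ‖S i‖ ^ 2)
        (fun i _ => by positivity) (Finset.mem_univ _)
    nlinarith [abs_nonneg (S ⟨c, hc⟩), norm_nonneg S, sq_abs (S ⟨c, hc⟩)]
  rw [← hcoord]
  refine le_trans habs ?_
  have hnormS : ‖S‖ ≤ Real.sqrt ((C.card : ℝ) * T) := by
    rw [show ((C.card : ℝ) * T) = (T : ℝ) * (C.card : ℝ) by ring]
    have := Real.sqrt_le_sqrt (show ‖S‖ ^ 2 ≤ (T : ℝ) * (C.card : ℝ) from key)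
    rwa [Real.sqrt_sq (norm_nonneg S)] at this
  exact hnormS
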